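/- arXiv:1109.0794 — 3 statements merged into one kernel-verified Lean document; each statement's English description precedes it below -/
import Mathlib

section
/- Let Φ' be a rank-2 (crystallographic, reduced) root system in a real inner product space, and let Φ ⊆ Φ' be a root subsystem such that every long root of Φ' belongs to Φ. If α₁, α₂ ∈ Φ and α₁ + α₂ ∈ Φ', then α₁ + α₂ ∈ Φ. In other words, a subsystem containing all long roots of a rank-2 root system is closed. -/
/-- A (crystallographic, reduced) root system in a real inner ℝ product space. -/
structure IsCrystRootSystem {V : Type*} [NormedAddCommGroup V] [InnerProductSpace ℝ V]
    (Φ : Set V) : Prop where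
  finite : Φ.Finite
  ne_zero : ∀ α ∈ Φ, α ≠ 0
  neg_mem : ∀ α ∈ Φ, -α ∈ Φ
  reflection_mem : ∀ α ∈ Φ, ∀ β ∈ Φ,
    β - (2 * (inner ℝ β α : ℝ) / (inner ℝ α α : ℝ)) • α ∈ Φ
  crystallographic : ∀ α ∈ Φ, ∀ β ∈ Φ,
    ∃ n : ℤ, 2 * (inner ℝ β α : ℝ) = (n : ℝ) * (inner ℝ α α : ℝ)
  reduced : ∀ α ∈ Φ, ∀ t : ℝ, t • α ∈ Φ → t = 1 ∨ t = -1

/-- Two roots lie in the same irreducible component iff they are connected by a chain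
of pairwise non-orthogonal roots. -/
def RootConnected {V : Type*} [NormedAddCommGroup V] [InnerProductSpace ℝ V]
    (Φ : Set V) (α β : V) : Prop :=
  Relation.ReflTransGen (fun a b => a ∈ Φ ∧ b ∈ Φ ∧ (inner ℝ a b : ℝ) ≠ 0) α β

/-- A root is long if its length is maximal among the roots of the irreducible
component containing it. -/
def IsLongRoot {V : Type*} [NormedAddCommGroup V] [InnerProductSpace ℝ V]
    (Φ : Set V) (α : V) : Prop :=
  α ∈ Φ ∧ ∀ β ∈ Φ, RootConnected Φ α β → (inner ℝ β β : ℝ) ≤ (inner ℝ α α : ℝ)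



lemma my_inner_self_pos {V : Type*} [NormedAddCommGroup V] [InnerProductSpace ℝ V]
    {x : V} (h : x ≠ 0) : (0:ℝ) < inner ℝ x x :=
  lt_of_le_of_ne real_inner_self_nonneg (Ne.symm (inner_self_ne_zero.mpr h))

lemma my_int_sq_ge_one {m : ℤ} (h : m ≠ 0) : (1:ℝ) ≤ (m:ℝ)^2 := by
  have h1 : (1:ℤ) ≤ m^2 := by nlinarith [Int.one_le_abs h, sq_abs m]
  exact_mod_cast h1

lemma my_indep {V : Type*} [NormedAddCommGroup V] [InnerProductSpace ℝ V]
    {α₁ α₂ : V} (hb : (0:ℝ) < inner ℝ α₂ α₂)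
    (hcs : (inner ℝ α₁ α₂ : ℝ)^2 < (inner ℝ α₁ α₁ : ℝ) * (inner ℝ α₂ α₂ : ℝ)) :
    LinearIndependent ℝ ![α₁, α₂] := by
  rw [LinearIndependent.pair_iff]
  intro s t hst
  have h1 : s * (inner ℝ α₁ α₁ : ℝ) + t * (inner ℝ α₁ α₂ : ℝ) = 0 := by
    have := congrArg (fun v => (inner ℝ α₁ v : ℝ)) hst
    simpa [inner_add_right, real_inner_smul_right, mul_comm] using this
  have h2 : s * (inner ℝ α₁ α₂ : ℝ) + t * (inner ℝ α₂ α₂ : ℝ) = 0 := by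
    have := congrArg (fun v => (inner ℝ α₂ v : ℝ)) hst
    simpa [inner_add_right, real_inner_smul_right, real_inner_comm, mul_comm] using this
  have hs : s * ((inner ℝ α₁ α₁ : ℝ) * (inner ℝ α₂ α₂ : ℝ) - (inner ℝ α₁ α₂ : ℝ)^2) = 0 := by
    linear_combination (inner ℝ α₂ α₂ : ℝ) * h1 - (inner ℝ α₁ α₂ : ℝ) * h2
  have hs0 : s = 0 := by
    rcases mul_eq_zero.mp hs with h | h
    · exact h
    · nlinarith
  refine ⟨hs0, ?_⟩
  rw [hs0] at h2
  simpa using (by nlinarith : t = 0)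

lemma my_span_pair {V : Type*} [NormedAddCommGroup V] [InnerProductSpace ℝ V]
    (Φ' : Set V) (hfin : Φ'.Finite)
    (hrank : Module.finrank ℝ (Submodule.span ℝ Φ') ≤ 2)
    {α₁ α₂ : V} (h₁ : α₁ ∈ Φ') (h₂ : α₂ ∈ Φ')
    (hind : LinearIndependent ℝ ![α₁, α₂]) :
    ∀ β ∈ Φ', ∃ x y : ℝ, β = x • α₁ + y • α₂ := by
  intro β hβ
  have hfd : FiniteDimensional ℝ (Submodule.span ℝ Φ') :=
    FiniteDimensional.span_of_finite ℝ hfin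
  have hsubset : Set.range ![α₁, α₂] ⊆ Φ' := by
    intro v hv
    obtain ⟨i, rfl⟩ := hv
    fin_cases i <;> simpa
  have hle : Submodule.span ℝ (Set.range ![α₁, α₂]) ≤ Submodule.span ℝ Φ' :=
    Submodule.span_mono hsubset
  have hfr : Module.finrank ℝ (Submodule.span ℝ (Set.range ![α₁, α₂])) = 2 := by
    rw [finrank_span_eq_card hind]; simp
  have heq : Submodule.span ℝ (Set.range ![α₁, α₂]) = Submodule.span ℝ Φ' :=
    Submodule.eq_of_le_of_finrank_le hle (by omega)
  have : β ∈ Submodule.span ℝ (Set.range ![α₁, α₂]) := by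
    rw [heq]; exact Submodule.subset_span hβ
  obtain ⟨cf, hcf⟩ := (Submodule.mem_span_range_iff_exists_fun ℝ).mp this
  exact ⟨cf 0, cf 1, by rw [← hcf, Fin.sum_univ_two]; simp⟩

lemma my_boundQ2 {x y Q : ℝ} {m k : ℤ} (hQ : Q = x^2+y^2) (hQpos : 0 < Q)
    (hx : x ≠ 0) (hy : y ≠ 0) (hm : 2*x = (m:ℝ)*Q) (hk : 2*y = (k:ℝ)*Q) : Q ≤ 2 := by
  have hm0 : m ≠ 0 := by
    rintro rfl; simp at hm; exact hx (by linarith)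
  have hk0 : k ≠ 0 := by
    rintro rfl; simp at hk; exact hy (by linarith)
  have hm2 := my_int_sq_ge_one hm0
  have hk2 := my_int_sq_ge_one hk0
  have h1 : (2*x)^2 = ((m:ℝ)*Q)^2 := by rw [hm]
  have h2 : (2*y)^2 = ((k:ℝ)*Q)^2 := by rw [hk]
  nlinarith [mul_nonneg (sub_nonneg.mpr hm2) (sq_nonneg Q),
    mul_nonneg (sub_nonneg.mpr hk2) (sq_nonneg Q), sq_nonneg Q]

lemma my_boundQ3 {x y Q : ℝ} {m k : ℤ} (hQ : Q = x^2+x*y+y^2) (hQpos : 0 < Q)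
    (hm : 2*x+y = (m:ℝ)*Q) (hk : x+2*y = (k:ℝ)*Q) : Q ≤ 3 := by
  by_cases hu : 2*x+y = 0
  · by_cases hv : x+2*y = 0
    · exfalso
      have hx0 : x = 0 := by linarith
      have hy0 : y = 0 := by linarith
      rw [hx0, hy0] at hQ; simp at hQ; linarith
    · have hy : y = -2*x := by linarith
      have hx0 : x ≠ 0 := by
        rintro rfl; rw [hy] at hQ; simp at hQ; nlinarith
      have hk0 : k ≠ 0 := by
        rintro rfl; simp at hk; exact hv hk
      have hk2 := my_int_sq_ge_one hk0
      have hQ3 : Q = 3*x^2 := by rw [hQ, hy]; ring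
      have hkx : (k:ℝ) * x = -1 := by
        have h3x : (3*x : ℝ) ≠ 0 := by simpa using hx0
        apply mul_left_cancel₀ h3x
        rw [hy] at hk
        linear_combination -hk - (k:ℝ)*hQ3
      nlinarith [mul_nonneg (sub_nonneg.mpr hk2) (sq_nonneg x), hkx]
  · by_cases hv : x+2*y = 0
    · have hx' : x = -2*y := by linarith
      have hy0 : y ≠ 0 := by
        rintro rfl; rw [hx'] at hQ; simp at hQ; nlinarith
      have hm0 : m ≠ 0 := by
        rintro rfl; simp at hm; exact hu hm
      have hm2 := my_int_sq_ge_one hm0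
      have hQ3 : Q = 3*y^2 := by rw [hQ, hx']; ring
      have hmy : (m:ℝ) * y = -1 := by
        have h3y : (3*y : ℝ) ≠ 0 := by simpa using hy0
        apply mul_left_cancel₀ h3y
        rw [hx'] at hm
        linear_combination -hm - (m:ℝ)*hQ3
      nlinarith [mul_nonneg (sub_nonneg.mpr hm2) (sq_nonneg y), hmy]
    · have hm0 : m ≠ 0 := by rintro rfl; simp at hm; exact hu hm
      have hk0 : k ≠ 0 := by rintro rfl; simp at hk; exact hv hk
      have hm2 := my_int_sq_ge_one hm0
      have hk2 := my_int_sq_ge_one hk0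
      have h1 : (2*x+y)^2 = ((m:ℝ)*Q)^2 := by rw [hm]
      have h2 : (x+2*y)^2 = ((k:ℝ)*Q)^2 := by rw [hk]
      nlinarith [mul_nonneg (sub_nonneg.mpr hm2) (sq_nonneg Q),
        mul_nonneg (sub_nonneg.mpr hk2) (sq_nonneg Q), sq_nonneg (x-y), sq_nonneg Q]

set_option maxHeartbeats 1000000 in
/-- A subsystem of a rank-2 root system containing all long roots is closed: if
`α₁, α₂ ∈ Φ` and `α₁ + α₂ ∈ Φ'` then `α₁ + α₂ ∈ Φ`. -/
theorem stmt_8 {V : Type*} [NormedAddCommGroup V] [InnerProductSpace ℝ V]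
    (Φ' Φ : Set V) (h' : IsCrystRootSystem Φ') (h : IsCrystRootSystem Φ)
    (hsub : Φ ⊆ Φ') (hlong : ∀ α : V, IsLongRoot Φ' α → α ∈ Φ)
    (hrank : Module.finrank ℝ (Submodule.span ℝ Φ') ≤ 2)
    {α₁ α₂ : V} (h₁ : α₁ ∈ Φ) (h₂ : α₂ ∈ Φ) (hsum : α₁ + α₂ ∈ Φ') :
    α₁ + α₂ ∈ Φ := by
  obtain ⟨n₁, hn₁⟩ := h.crystallographic α₁ h₁ α₂ h₂
  obtain ⟨n₂, hn₂⟩ := h.crystallographic α₂ h₂ α₁ h₁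
  have ha : (0:ℝ) < inner ℝ α₁ α₁ := my_inner_self_pos (h'.ne_zero α₁ (hsub h₁))
  have hb : (0:ℝ) < inner ℝ α₂ α₂ := my_inner_self_pos (h'.ne_zero α₂ (hsub h₂))
  by_cases e₁ : n₁ = -1
  · have hmem := h.reflection_mem α₁ h₁ α₂ h₂
    have e₁' : ((n₁:ℤ):ℝ) = -1 := by exact_mod_cast e₁
    have hco : 2 * (inner ℝ α₂ α₁ : ℝ) / (inner ℝ α₁ α₁ : ℝ) = -1 := by
      rw [div_eq_iff (ne_of_gt ha), hn₁, e₁']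
    rw [hco] at hmem
    simpa [neg_smul, one_smul, sub_neg_eq_add, add_comm] using hmem
  by_cases e₂ : n₂ = -1
  · have hmem := h.reflection_mem α₂ h₂ α₁ h₁
    have e₂' : ((n₂:ℤ):ℝ) = -1 := by exact_mod_cast e₂
    have hco : 2 * (inner ℝ α₁ α₂ : ℝ) / (inner ℝ α₂ α₂ : ℝ) = -1 := by
      rw [div_eq_iff (ne_of_gt hb), hn₂, e₂']
    rw [hco] at hmem
    simpa [neg_smul, one_smul, sub_neg_eq_add] using hmem
  -- now show α₁ + α₂ is a long root of Φ'
  rw [real_inner_comm α₁ α₂] at hn₁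
  -- hn₁ : 2 * ⟪α₁,α₂⟫ = n₁ * ⟪α₁,α₁⟫ ;  hn₂ : 2 * ⟪α₁,α₂⟫ = n₂ * ⟪α₂,α₂⟫
  refine hlong _ ⟨hsum, ?_⟩
  intro β hβ _
  have hσσ : (inner ℝ (α₁+α₂) (α₁+α₂) : ℝ)
      = (inner ℝ α₁ α₁:ℝ) + 2*(inner ℝ α₁ α₂:ℝ) + (inner ℝ α₂ α₂:ℝ) :=
    real_inner_add_add_self α₁ α₂
  have e1 : (inner ℝ α₁ (α₁+α₂) : ℝ) = (inner ℝ α₁ α₁:ℝ) + (inner ℝ α₁ α₂:ℝ) := by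
    rw [inner_add_right]
  have hcs := real_inner_mul_inner_self_le α₁ α₂
  rcases lt_trichotomy ((inner ℝ α₁ α₂ : ℝ)) 0 with hc | hc | hc
  · -- c < 0 : impossible
    exfalso
    have hn1r : ((n₁:ℤ):ℝ) < 0 := by nlinarith
    have hn2r : ((n₂:ℤ):ℝ) < 0 := by nlinarith
    have hn1z : n₁ ≤ -2 := by
      have h5 : n₁ < 0 := by exact_mod_cast hn1r
      omega
    have hn2z : n₂ ≤ -2 := by
      have h5 : n₂ < 0 := by exact_mod_cast hn2r
      omega
    have h4 : (2*(inner ℝ α₁ α₂:ℝ))*(2*(inner ℝ α₁ α₂:ℝ))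
        = ((n₁:ℝ)*(inner ℝ α₁ α₁:ℝ))*((n₂:ℝ)*(inner ℝ α₂ α₂:ℝ)) := by
      linear_combination (2*(inner ℝ α₁ α₂:ℝ))*hn₂ + ((n₂:ℝ)*(inner ℝ α₂ α₂:ℝ))*hn₁
    have hprod : ((n₁*n₂ : ℤ):ℝ) ≤ 4 := by
      push_cast
      nlinarith [h4, hcs, mul_pos ha hb]
    have hprodZ : n₁ * n₂ ≤ 4 := by exact_mod_cast hprod
    have hnn := mul_nonneg (show (0:ℤ) ≤ -(n₁+2) by omega) (show (0:ℤ) ≤ -(n₂+2) by omega)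
    have hsumn : -4 ≤ n₁ + n₂ := by nlinarith
    have h12 : n₁ = -2 ∧ n₂ = -2 := by omega
    rw [h12.1] at hn₁
    rw [h12.2] at hn₂
    push_cast at hn₁ hn₂
    have hσ0 : (inner ℝ (α₁+α₂) (α₁+α₂) : ℝ) = 0 := by rw [hσσ]; linarith
    exact h'.ne_zero _ hsum (inner_self_eq_zero.mp hσ0)
  · -- c = 0 : the sum is a long root
    obtain ⟨m₁, hm₁⟩ := h'.crystallographic (α₁+α₂) hsum α₁ (hsub h₁)
    obtain ⟨m₂, hm₂⟩ := h'.crystallographic (α₁+α₂) hsum α₂ (hsub h₂)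
    have e2 : (inner ℝ α₂ (α₁+α₂) : ℝ) = (inner ℝ α₁ α₂:ℝ) + (inner ℝ α₂ α₂:ℝ) := by
      rw [inner_add_right, real_inner_comm α₁ α₂]
    rw [e1, hσσ, hc] at hm₁
    rw [e2, hσσ, hc] at hm₂
    -- hm₁ : 2*(a+0) = m₁*(a+2*0+b), hm₂ : 2*(0+b) = m₂*(a+2*0+b)
    have hm1r : (0:ℝ) < (m₁:ℝ) := by nlinarith
    have hm2r : (0:ℝ) < (m₂:ℝ) := by nlinarith
    have hm1z : 1 ≤ m₁ := by
      have h5 : 0 < m₁ := by exact_mod_cast hm1r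
      omega
    have hm2z : 1 ≤ m₂ := by
      have h5 : 0 < m₂ := by exact_mod_cast hm2r
      omega
    have hsum2 : ((m₁+m₂ : ℤ):ℝ) * ((inner ℝ α₁ α₁:ℝ) + (inner ℝ α₂ α₂:ℝ))
        = 2 * ((inner ℝ α₁ α₁:ℝ) + (inner ℝ α₂ α₂:ℝ)) := by
      push_cast
      linear_combination -hm₁ - hm₂
    have hsum2z : m₁ + m₂ = 2 := by
      have := mul_right_cancel₀ (show ((inner ℝ α₁ α₁:ℝ) + (inner ℝ α₂ α₂:ℝ)) ≠ 0 from ne_of_gt (by linarith)) hsum2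
      exact_mod_cast this
    have hm1one : m₁ = 1 := by omega
    rw [hm1one] at hm₁
    push_cast at hm₁
    have hab : (inner ℝ α₁ α₁ : ℝ) = (inner ℝ α₂ α₂ : ℝ) := by linarith
    have hcs' : (inner ℝ α₁ α₂ : ℝ)^2 < (inner ℝ α₁ α₁ : ℝ) * (inner ℝ α₂ α₂ : ℝ) := by
      rw [hc]; simpa using mul_pos ha hb
    obtain ⟨x, y, rfl⟩ := my_span_pair Φ' h'.finite hrank (hsub h₁) (hsub h₂)
      (my_indep hb hcs') β hβ
    have hββ : (inner ℝ (x•α₁+y•α₂) (x•α₁+y•α₂) : ℝ)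
        = x^2*(inner ℝ α₁ α₁:ℝ) + 2*x*y*(inner ℝ α₁ α₂:ℝ) + y^2*(inner ℝ α₂ α₂:ℝ) := by
      simp only [inner_add_left, inner_add_right, real_inner_smul_left,
        real_inner_smul_right, real_inner_comm α₁ α₂]
      ring
    have hexp₁ : (inner ℝ α₁ (x•α₁+y•α₂) : ℝ)
        = x*(inner ℝ α₁ α₁:ℝ) + y*(inner ℝ α₁ α₂:ℝ) := by
      simp only [inner_add_right, real_inner_smul_right]
    have hexp₂ : (inner ℝ α₂ (x•α₁+y•α₂) : ℝ)
        = x*(inner ℝ α₁ α₂:ℝ) + y*(inner ℝ α₂ α₂:ℝ) := by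
      simp only [inner_add_right, real_inner_smul_right, real_inner_comm α₁ α₂]
    have hQpos : 0 < x^2 + y^2 := by
      have hβpos : (0:ℝ) < inner ℝ (x•α₁+y•α₂) (x•α₁+y•α₂) :=
        my_inner_self_pos (h'.ne_zero _ hβ)
      have hββ' := hββ
      rw [hc, hab] at hββ'
      nlinarith [hββ', hb, sq_nonneg x, sq_nonneg y]
    by_cases hx0 : x = 0
    · have hyα : (x•α₁+y•α₂) = y • α₂ := by rw [hx0]; simp
      have hy1 := h'.reduced α₂ (hsub h₂) y (by rw [← hyα]; exact hβ)
      have hy2 : y^2 = 1 := by rcases hy1 with hh | hh <;> rw [hh] <;> norm_num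
      rw [hββ, hσσ, hc, hab, hx0, hy2]
      nlinarith [hb]
    by_cases hy0 : y = 0
    · have hxα : (x•α₁+y•α₂) = x • α₁ := by rw [hy0]; simp
      have hx1 := h'.reduced α₁ (hsub h₁) x (by rw [← hxα]; exact hβ)
      have hx2 : x^2 = 1 := by rcases hx1 with hh | hh <;> rw [hh] <;> norm_num
      rw [hββ, hσσ, hc, hab, hy0, hx2]
      nlinarith [hb]
    obtain ⟨m, hm⟩ := h'.crystallographic _ hβ α₁ (hsub h₁)
    obtain ⟨k, hk⟩ := h'.crystallographic _ hβ α₂ (hsub h₂)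
    rw [hexp₁, hββ, hc, hab] at hm
    rw [hexp₂, hββ, hc, hab] at hk
    have hmx : 2*x = (m:ℝ)*(x^2+y^2) := by
      apply mul_right_cancel₀ (ne_of_gt hb)
      linear_combination hm
    have hky : 2*y = (k:ℝ)*(x^2+y^2) := by
      apply mul_right_cancel₀ (ne_of_gt hb)
      linear_combination hk
    have hQ2 : x^2+y^2 ≤ 2 := my_boundQ2 rfl hQpos hx0 hy0 hmx hky
    rw [hββ, hσσ, hc, hab]
    nlinarith [mul_le_mul_of_nonneg_right hQ2 hb.le]
  · -- c > 0
    obtain ⟨m₁, hm₁⟩ := h'.crystallographic (α₁+α₂) hsum α₁ (hsub h₁)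
    rw [e1, hσσ] at hm₁
    have hn1r : (0:ℝ) < ((n₁:ℤ):ℝ) := by nlinarith
    have hn2r : (0:ℝ) < ((n₂:ℤ):ℝ) := by nlinarith
    have hn1z : 1 ≤ n₁ := by
      have h5 : 0 < n₁ := by exact_mod_cast hn1r
      omega
    have hn2z : 1 ≤ n₂ := by
      have h5 : 0 < n₂ := by exact_mod_cast hn2r
      omega
    have h4 : (2*(inner ℝ α₁ α₂:ℝ))*(2*(inner ℝ α₁ α₂:ℝ))
        = ((n₁:ℝ)*(inner ℝ α₁ α₁:ℝ))*((n₂:ℝ)*(inner ℝ α₂ α₂:ℝ)) := by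
      linear_combination (2*(inner ℝ α₁ α₂:ℝ))*hn₂ + ((n₂:ℝ)*(inner ℝ α₂ α₂:ℝ))*hn₁
    have hprod : ((n₁*n₂ : ℤ):ℝ) ≤ 4 := by
      push_cast
      nlinarith [h4, hcs, mul_pos ha hb]
    have hprodZ : n₁ * n₂ ≤ 4 := by exact_mod_cast hprod
    have keyR : ((n₂*(2+n₁) : ℤ):ℝ) * (2*(inner ℝ α₁ α₂:ℝ))
        = ((m₁*(n₁+n₂+n₁*n₂) : ℤ):ℝ) * (2*(inner ℝ α₁ α₂:ℝ)) := by
      push_cast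
      linear_combination ((n₁:ℝ)*(n₂:ℝ))*hm₁ + ((n₂:ℝ)*(2-(m₁:ℝ)))*hn₁
        + (-(m₁:ℝ)*(n₁:ℝ))*hn₂
    have key1 : n₂*(2+n₁) = m₁*(n₁+n₂+n₁*n₂) := by
      have := mul_right_cancel₀ (show (2*(inner ℝ α₁ α₂:ℝ)) ≠ 0 from ne_of_gt (by linarith)) keyR
      exact_mod_cast this
    have hn1u : n₁ ≤ 4 := by nlinarith
    have hn2u : n₂ ≤ 4 := by nlinarith
    have hcase : (n₁ = 1 ∧ n₂ = 1) ∨ (n₁ = 2 ∧ n₂ = 2) := by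
      interval_cases n₁ <;> interval_cases n₂ <;> omega
    rcases hcase with ⟨hA1, hB1⟩ | ⟨hA1, hB1⟩
    · -- n₁ = n₂ = 1 : a = b = 2c, sum is long
      rw [hA1] at hn₁; rw [hB1] at hn₂
      push_cast at hn₁ hn₂
      have hA : (inner ℝ α₁ α₁ : ℝ) = 2*(inner ℝ α₁ α₂ : ℝ) := by linarith
      have hB : (inner ℝ α₂ α₂ : ℝ) = 2*(inner ℝ α₁ α₂ : ℝ) := by linarith
      have hcs' : (inner ℝ α₁ α₂ : ℝ)^2 < (inner ℝ α₁ α₁ : ℝ) * (inner ℝ α₂ α₂ : ℝ) := by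
        rw [hA, hB]; nlinarith
      obtain ⟨x, y, rfl⟩ := my_span_pair Φ' h'.finite hrank (hsub h₁) (hsub h₂)
        (my_indep hb hcs') β hβ
      have hββ : (inner ℝ (x•α₁+y•α₂) (x•α₁+y•α₂) : ℝ)
          = x^2*(inner ℝ α₁ α₁:ℝ) + 2*x*y*(inner ℝ α₁ α₂:ℝ) + y^2*(inner ℝ α₂ α₂:ℝ) := by
        simp only [inner_add_left, inner_add_right, real_inner_smul_left,
          real_inner_smul_right, real_inner_comm α₁ α₂]
        ring
      have hexp₁ : (inner ℝ α₁ (x•α₁+y•α₂) : ℝ)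
          = x*(inner ℝ α₁ α₁:ℝ) + y*(inner ℝ α₁ α₂:ℝ) := by
        simp only [inner_add_right, real_inner_smul_right]
      have hexp₂ : (inner ℝ α₂ (x•α₁+y•α₂) : ℝ)
          = x*(inner ℝ α₁ α₂:ℝ) + y*(inner ℝ α₂ α₂:ℝ) := by
        simp only [inner_add_right, real_inner_smul_right, real_inner_comm α₁ α₂]
      have hQpos : 0 < x^2 + x*y + y^2 := by
        have hβpos : (0:ℝ) < inner ℝ (x•α₁+y•α₂) (x•α₁+y•α₂) :=
          my_inner_self_pos (h'.ne_zero _ hβ)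
        have hββ' := hββ
        rw [hA, hB] at hββ'
        nlinarith [hββ', hc, sq_nonneg (x+y), sq_nonneg x, sq_nonneg y]
      obtain ⟨m, hm⟩ := h'.crystallographic _ hβ α₁ (hsub h₁)
      obtain ⟨k, hk⟩ := h'.crystallographic _ hβ α₂ (hsub h₂)
      rw [hexp₁, hββ, hA, hB] at hm
      rw [hexp₂, hββ, hA, hB] at hk
      have hmx : 2*x+y = (m:ℝ)*(x^2+x*y+y^2) := by
        apply mul_right_cancel₀ (show (2*(inner ℝ α₁ α₂:ℝ)) ≠ 0 from ne_of_gt (by linarith))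
        linear_combination hm
      have hky : x+2*y = (k:ℝ)*(x^2+x*y+y^2) := by
        apply mul_right_cancel₀ (show (2*(inner ℝ α₁ α₂:ℝ)) ≠ 0 from ne_of_gt (by linarith))
        linear_combination hk
      have hQ3 : x^2+x*y+y^2 ≤ 3 := my_boundQ3 rfl hQpos hmx hky
      rw [hββ, hσσ, hA, hB]
      nlinarith [mul_le_mul_of_nonneg_right hQ3 hc.le]
    · -- n₁ = n₂ = 2 : α₁ + α₂ = 2α₁, impossible
      exfalso
      rw [hA1] at hn₁; rw [hB1] at hn₂
      push_cast at hn₁ hn₂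
      have hz : (inner ℝ ((α₁+α₂) - (2:ℝ)•α₁) ((α₁+α₂) - (2:ℝ)•α₁) : ℝ) = 0 := by
        simp only [inner_sub_left, inner_sub_right, inner_add_left, inner_add_right,
          real_inner_smul_left, real_inner_smul_right, real_inner_comm α₁ α₂]
        linarith
      have hz0 : (α₁+α₂) - (2:ℝ)•α₁ = 0 := inner_self_eq_zero.mp hz
      have heq2 : α₁+α₂ = (2:ℝ)•α₁ := by rwa [sub_eq_zero] at hz0
      rcases h'.reduced α₁ (hsub h₁) 2 (by rw [← heq2]; exact hsum) with hh | hh <;>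
        norm_num at hh
end

section
/- Let Φ' be a (crystallographic, reduced) root system in a real inner product space and let Φ ⊆ Φ' be a root subsystem containing all long roots of Φ'. Then Φ is closed in Φ': for any α₁, α₂ ∈ Φ with α₁ + α₂ ∈ Φ', one has α₁ + α₂ ∈ Φ. -/
section Aux

variable {V : Type*} [NormedAddCommGroup V] [InnerProductSpace ℝ V]

lemma inner_self_pos' {x : V} (hx : x ≠ 0) : 0 < (inner ℝ x x : ℝ) :=
  lt_of_le_of_ne real_inner_self_nonneg (fun hh => hx (inner_self_eq_zero.mp hh.symm))

lemma reflect_inner_self {y γ : V} (hy : (inner ℝ y y : ℝ) ≠ 0) :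
    (inner ℝ (γ - (2 * (inner ℝ γ y : ℝ) / (inner ℝ y y : ℝ)) • y)
      (γ - (2 * (inner ℝ γ y : ℝ) / (inner ℝ y y : ℝ)) • y) : ℝ) = inner ℝ γ γ := by
  simp only [inner_sub_left, inner_sub_right, real_inner_smul_left, real_inner_smul_right,
    real_inner_comm γ y]
  field_simp
  ring

/-- Cartan integer bound: for non-proportional non-orthogonal roots the product of the
two Cartan integers lies in `{1, 2, 3}`. -/
lemma cartan_bound {Φ' : Set V} (h' : IsCrystRootSystem Φ') {x y : V}
    (hx : x ∈ Φ') (hy : y ∈ Φ') (hxy : (inner ℝ x y : ℝ) ≠ 0)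
    (hne1 : y ≠ x) (hne2 : y ≠ -x) {n m : ℤ}
    (hn : 2 * (inner ℝ y x : ℝ) = (n : ℝ) * (inner ℝ x x : ℝ))
    (hm : 2 * (inner ℝ x y : ℝ) = (m : ℝ) * (inner ℝ y y : ℝ)) :
    1 ≤ n * m ∧ n * m ≤ 3 := by
  have hx0 : x ≠ 0 := h'.ne_zero x hx
  have hy0 : y ≠ 0 := h'.ne_zero y hy
  have hxx := inner_self_pos' hx0
  have hyy := inner_self_pos' hy0
  have hcomm : (inner ℝ y x : ℝ) = inner ℝ x y := real_inner_comm x y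
  have hprod : (n : ℝ) * (m : ℝ) * ((inner ℝ x x : ℝ) * (inner ℝ y y : ℝ))
      = 4 * (inner ℝ x y : ℝ) ^ 2 := by
    linear_combination (-2 * (inner ℝ x y : ℝ)) * hn + (-(n : ℝ) * (inner ℝ x x : ℝ)) * hm
      + (4 * (inner ℝ x y : ℝ)) * hcomm
  have hv2 : 0 < (inner ℝ x y : ℝ) ^ 2 :=
    lt_of_le_of_ne (sq_nonneg _) (Ne.symm (pow_ne_zero 2 hxy))
  have hnm_pos : (0 : ℝ) < (n : ℝ) * (m : ℝ) := by
    nlinarith [mul_pos hxx hyy]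
  have h1 : 1 ≤ n * m := by
    have : (0 : ℝ) < ((n * m : ℤ) : ℝ) := by push_cast; exact hnm_pos
    have := Int.cast_pos.mp this
    omega
  refine ⟨h1, ?_⟩
  by_contra h3
  have h4 : (4 : ℝ) ≤ (n : ℝ) * (m : ℝ) := by
    exact_mod_cast (by push_cast; exact_mod_cast (by omega : (4:ℤ) ≤ n * m) : (4:ℝ) ≤ ((n*m : ℤ):ℝ))
  have hle : (inner ℝ x y : ℝ) ^ 2 ≤ (inner ℝ x x : ℝ) * (inner ℝ y y : ℝ) := by
    nlinarith [real_inner_mul_inner_self_le x y]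
  have hge : (inner ℝ x x : ℝ) * (inner ℝ y y : ℝ) ≤ (inner ℝ x y : ℝ) ^ 2 := by
    nlinarith [mul_pos hxx hyy]
  have heq : (inner ℝ x y : ℝ) ^ 2 = (inner ℝ x x : ℝ) * (inner ℝ y y : ℝ) := le_antisymm hle hge
  have hzz : (inner ℝ ((inner ℝ x x : ℝ) • y - (inner ℝ x y : ℝ) • x)
      ((inner ℝ x x : ℝ) • y - (inner ℝ x y : ℝ) • x) : ℝ) = 0 := by
    simp only [inner_sub_left, inner_sub_right, real_inner_smul_left, real_inner_smul_right,
      real_inner_comm x y]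
    linear_combination (-(inner ℝ x x : ℝ)) * heq
  have hz : (inner ℝ x x : ℝ) • y - (inner ℝ x y : ℝ) • x = 0 := inner_self_eq_zero.mp hzz
  have h5 : (inner ℝ x x : ℝ) • y = (inner ℝ x y : ℝ) • x := by rwa [sub_eq_zero] at hz
  have h6 : y = ((inner ℝ x y : ℝ) / (inner ℝ x x : ℝ)) • x := by
    rw [div_eq_inv_mul, mul_smul, ← h5, inv_smul_smul₀ (ne_of_gt hxx)]
  rcases h'.reduced x hx _ (h6 ▸ hy) with e | e
  · exact hne1 (by rw [h6, e, one_smul])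
  · exact hne2 (by rw [h6, e, neg_one_smul])

/-- Any root connected to `β` has a representative of the same length which is either
`±β` or non-orthogonal to `β`. -/
lemma exists_connected_witness {Φ' : Set V} (h' : IsCrystRootSystem Φ') {β γ : V}
    (hγ : γ ∈ Φ')
    (hc : Relation.ReflTransGen (fun a b => a ∈ Φ' ∧ b ∈ Φ' ∧ (inner ℝ a b : ℝ) ≠ 0) β γ) :
    ∃ γ' ∈ Φ', (inner ℝ γ' γ' : ℝ) = inner ℝ γ γ ∧
      ((inner ℝ β γ' : ℝ) ≠ 0 ∨ γ' = β ∨ γ' = -β) := by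
  induction hc using Relation.ReflTransGen.head_induction_on with
  | refl => exact ⟨γ, hγ, rfl, Or.inr (Or.inl rfl)⟩
  | @head x y hr htail ih =>
    obtain ⟨hx, hy, hxy⟩ := hr
    obtain ⟨γ', hγ'mem, hlen, halt⟩ := ih
    have hyy : (inner ℝ y y : ℝ) ≠ 0 := ne_of_gt (inner_self_pos' (h'.ne_zero y hy))
    rcases halt with h0 | rfl | rfl
    · by_cases hxg : (inner ℝ x γ' : ℝ) = 0
      · refine ⟨γ' - (2 * (inner ℝ γ' y : ℝ) / (inner ℝ y y : ℝ)) • y,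
          h'.reflection_mem y hy γ' hγ'mem, ?_, Or.inl ?_⟩
        · rw [reflect_inner_self hyy]; exact hlen
        · have hexp : (inner ℝ x (γ' - (2 * (inner ℝ γ' y : ℝ) / (inner ℝ y y : ℝ)) • y) : ℝ)
              = (inner ℝ x γ' : ℝ) - (2 * (inner ℝ γ' y : ℝ) / (inner ℝ y y : ℝ)) * inner ℝ x y := by
            simp [inner_sub_right, real_inner_smul_right]
          rw [hexp, hxg, zero_sub, neg_ne_zero]
          refine mul_ne_zero (div_ne_zero ?_ hyy) hxy
          have : (inner ℝ γ' y : ℝ) = inner ℝ y γ' := real_inner_comm y γ'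
          rw [this]
          intro hz
          exact h0 (by linarith)
      · exact ⟨γ', hγ'mem, hlen, Or.inl hxg⟩
    · exact ⟨γ', hγ'mem, hlen, Or.inl hxy⟩
    · exact ⟨-y, hγ'mem, hlen, Or.inl (by rw [inner_neg_right]; exact neg_ne_zero.mpr hxy)⟩

end Aux

set_option maxHeartbeats 1600000 in
/-- A subsystem of a root system containing all long roots is closed: if
`α₁, α₂ ∈ Φ` and `α₁ + α₂ ∈ Φ'` then `α₁ + α₂ ∈ Φ`. -/
theorem stmt_9 {V : Type*} [NormedAddCommGroup V] [InnerProductSpace ℝ V]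
    (Φ' Φ : Set V) (h' : IsCrystRootSystem Φ') (h : IsCrystRootSystem Φ)
    (hsub : Φ ⊆ Φ') (hlong : ∀ α : V, IsLongRoot Φ' α → α ∈ Φ)
    {α₁ α₂ : V} (h₁ : α₁ ∈ Φ) (h₂ : α₂ ∈ Φ) (hsum : α₁ + α₂ ∈ Φ') :
    α₁ + α₂ ∈ Φ := by
  have hα₁' : α₁ ∈ Φ' := hsub h₁
  have hα₂' : α₂ ∈ Φ' := hsub h₂
  have hA : (0:ℝ) < inner ℝ α₁ α₁ := inner_self_pos' (h.ne_zero _ h₁)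
  have hB : (0:ℝ) < inner ℝ α₂ α₂ := inner_self_pos' (h.ne_zero _ h₂)
  have hN : (0:ℝ) < inner ℝ (α₁ + α₂) (α₁ + α₂) := inner_self_pos' (h'.ne_zero _ hsum)
  obtain ⟨n₁, hn₁⟩ := h'.crystallographic α₁ hα₁' (α₁ + α₂) hsum
  obtain ⟨n₂, hn₂⟩ := h'.crystallographic α₂ hα₂' (α₁ + α₂) hsum
  obtain ⟨m₁, hm₁⟩ := h'.crystallographic (α₁ + α₂) hsum α₁ hα₁'
  obtain ⟨m₂, hm₂⟩ := h'.crystallographic (α₁ + α₂) hsum α₂ hα₂'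
  have hsplit1 : (inner ℝ (α₁ + α₂) α₁ : ℝ) = inner ℝ α₁ α₁ + inner ℝ α₂ α₁ := by
    rw [inner_add_left]
  have hsplit2 : (inner ℝ (α₁ + α₂) α₂ : ℝ) = inner ℝ α₁ α₂ + inner ℝ α₂ α₂ := by
    rw [inner_add_left]
  have hsplitN : (inner ℝ (α₁ + α₂) (α₁ + α₂) : ℝ)
      = inner ℝ (α₁ + α₂) α₁ + inner ℝ (α₁ + α₂) α₂ := by rw [inner_add_right]
  have hcm1 : (inner ℝ α₁ (α₁ + α₂) : ℝ) = inner ℝ (α₁ + α₂) α₁ := real_inner_comm (α₁ + α₂) α₁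
  have hcm2 : (inner ℝ α₂ (α₁ + α₂) : ℝ) = inner ℝ (α₁ + α₂) α₂ := real_inner_comm (α₁ + α₂) α₂
  by_cases hc1 : n₁ = 1
  · subst hc1
    have hkey : 2 * (inner ℝ α₂ α₁ : ℝ) = -(inner ℝ α₁ α₁) := by
      push_cast at hn₁; linarith [hsplit1]
    have hmem := h.reflection_mem α₁ h₁ α₂ h₂
    have hco : 2 * (inner ℝ α₂ α₁ : ℝ) / (inner ℝ α₁ α₁ : ℝ) = -1 := by
      rw [hkey]; field_simp
    rw [hco] at hmem
    have heq : α₂ - (-1 : ℝ) • α₁ = α₁ + α₂ := by module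
    rwa [heq] at hmem
  by_cases hc2 : n₂ = 1
  · subst hc2
    have hkey : 2 * (inner ℝ α₁ α₂ : ℝ) = -(inner ℝ α₂ α₂) := by
      push_cast at hn₂; linarith [hsplit2]
    have hmem := h.reflection_mem α₂ h₂ α₁ h₁
    have hco : 2 * (inner ℝ α₁ α₂ : ℝ) / (inner ℝ α₂ α₂ : ℝ) = -1 := by
      rw [hkey]; field_simp
    rw [hco] at hmem
    have heq : α₁ - (-1 : ℝ) • α₂ = α₁ + α₂ := by module
    rwa [heq] at hmem
  have hne_b1 : α₁ + α₂ ≠ α₁ := by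
    intro hh; exact h.ne_zero α₂ h₂ (by rwa [add_eq_left] at hh)
  have hne_b2 : α₁ + α₂ ≠ α₂ := by
    intro hh; exact h.ne_zero α₁ h₁ (by rwa [add_eq_right] at hh)
  have hne_b1' : α₁ + α₂ ≠ -α₁ := by
    intro hh
    have h3 : α₂ = (-2 : ℝ) • α₁ := by
      have : α₁ + α₂ = α₁ + (-2 : ℝ) • α₁ := by rw [hh]; module
      exact add_left_cancel this
    rcases h'.reduced α₁ hα₁' (-2) (h3 ▸ hα₂') with e | e <;> norm_num at e
  have hne_b2' : α₁ + α₂ ≠ -α₂ := by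
    intro hh
    have h3 : α₁ = (-2 : ℝ) • α₂ := by
      have : α₂ + α₁ = α₂ + (-2 : ℝ) • α₂ := by rw [add_comm, hh]; module
      exact add_left_cancel this
    rcases h'.reduced α₂ hα₂' (-2) (h3 ▸ hα₁') with e | e <;> norm_num at e
  -- both inner ℝ products with the sum are positive
  have hspos : 0 < (inner ℝ (α₁ + α₂) α₁ : ℝ) := by
    by_contra hle; push_neg at hle
    have ht : (inner ℝ (α₁ + α₂) (α₁ + α₂) : ℝ) ≤ inner ℝ (α₁ + α₂) α₂ := by linarith [hsplitN]
    have htne : (inner ℝ α₂ (α₁ + α₂) : ℝ) ≠ 0 := by rw [hcm2]; nlinarith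
    have hb := cartan_bound h' hα₂' hsum htne hne_b2 hne_b2' hn₂ hm₂
    have hm2Z : (2:ℤ) ≤ m₂ := by
      have : (2:ℝ) ≤ (m₂:ℝ) := by nlinarith [hm₂, hN, ht, hcm2]
      exact_mod_cast this
    have hn2Z : (1:ℤ) ≤ n₂ := by
      have : (0:ℝ) < (n₂:ℝ) := by nlinarith [hn₂, hB, hN, ht]
      have : (0:ℤ) < n₂ := by exact_mod_cast this
      omega
    have h2n : 2 ≤ n₂ := by omega
    nlinarith [hb.2, hm2Z, h2n]
  have htpos : 0 < (inner ℝ (α₁ + α₂) α₂ : ℝ) := by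
    by_contra hle; push_neg at hle
    have ht : (inner ℝ (α₁ + α₂) (α₁ + α₂) : ℝ) ≤ inner ℝ (α₁ + α₂) α₁ := by linarith [hsplitN]
    have htne : (inner ℝ α₁ (α₁ + α₂) : ℝ) ≠ 0 := by rw [hcm1]; nlinarith
    have hb := cartan_bound h' hα₁' hsum htne hne_b1 hne_b1' hn₁ hm₁
    have hm1Z : (2:ℤ) ≤ m₁ := by
      have : (2:ℝ) ≤ (m₁:ℝ) := by nlinarith [hm₁, hN, ht, hcm1]
      exact_mod_cast this
    have hn1Z : (1:ℤ) ≤ n₁ := by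
      have : (0:ℝ) < (n₁:ℝ) := by nlinarith [hn₁, hA, hN, ht]
      have : (0:ℤ) < n₁ := by exact_mod_cast this
      omega
    have h2n : 2 ≤ n₁ := by omega
    nlinarith [hb.2, hm1Z, h2n]
  -- Cartan data for α₁, α₂ versus the sum
  have hxy1 : (inner ℝ α₁ (α₁ + α₂) : ℝ) ≠ 0 := by rw [hcm1]; exact ne_of_gt hspos
  have hxy2 : (inner ℝ α₂ (α₁ + α₂) : ℝ) ≠ 0 := by rw [hcm2]; exact ne_of_gt htpos
  have hb1 := cartan_bound h' hα₁' hsum hxy1 hne_b1 hne_b1' hn₁ hm₁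
  have hb2 := cartan_bound h' hα₂' hsum hxy2 hne_b2 hne_b2' hn₂ hm₂
  have hn1Z : (1:ℤ) ≤ n₁ := by
    have : (0:ℝ) < (n₁:ℝ) := by nlinarith [hn₁, hA, hspos]
    have : (0:ℤ) < n₁ := by exact_mod_cast this
    omega
  have hn2Z : (1:ℤ) ≤ n₂ := by
    have : (0:ℝ) < (n₂:ℝ) := by nlinarith [hn₂, hB, htpos]
    have : (0:ℤ) < n₂ := by exact_mod_cast this
    omega
  have h2n₁ : 2 ≤ n₁ := by omega
  have h2n₂ : 2 ≤ n₂ := by omega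
  have hm1Z : (1:ℤ) ≤ m₁ := by
    have : (0:ℝ) < (m₁:ℝ) := by nlinarith [hm₁, hN, hspos, hcm1]
    have : (0:ℤ) < m₁ := by exact_mod_cast this
    omega
  have hm2Z : (1:ℤ) ≤ m₂ := by
    have : (0:ℝ) < (m₂:ℝ) := by nlinarith [hm₂, hN, htpos, hcm2]
    have : (0:ℤ) < m₂ := by exact_mod_cast this
    omega
  have hm1one : m₁ = 1 := by
    by_contra hmm
    have : 2 ≤ m₁ := by omega
    nlinarith [hb1.2, h2n₁]
  have hm2one : m₂ = 1 := by
    by_contra hmm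
    have : 2 ≤ m₂ := by omega
    nlinarith [hb2.2, h2n₂]
  have hNA : (inner ℝ (α₁ + α₂) (α₁ + α₂) : ℝ) = (n₁:ℝ) * inner ℝ α₁ α₁ := by
    rw [hm1one] at hm₁; push_cast at hm₁
    linarith [hn₁, hcm1]
  have hNB : (inner ℝ (α₁ + α₂) (α₁ + α₂) : ℝ) = (n₂:ℝ) * inner ℝ α₂ α₂ := by
    rw [hm2one] at hm₂; push_cast at hm₂
    linarith [hn₂, hcm2]
  -- the sum is a long root of Φ'
  apply hlong
  refine ⟨hsum, ?_⟩
  intro γ hγ hcγ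
  obtain ⟨γ', hγ'mem, hlen, halt⟩ := exists_connected_witness h' hγ hcγ
  rw [← hlen]
  have main : ∀ δ, δ ∈ Φ' → 0 < (inner ℝ (α₁ + α₂) δ : ℝ) →
      (inner ℝ δ δ : ℝ) ≤ inner ℝ (α₁ + α₂) (α₁ + α₂) := by
    intro δ hδ hpos
    by_contra hgt; push_neg at hgt
    have hG : (0:ℝ) < inner ℝ δ δ := inner_self_pos' (h'.ne_zero δ hδ)
    have hneδ1 : δ ≠ α₁ + α₂ := by
      intro e; rw [e] at hgt; exact lt_irrefl _ hgt
    have hneδ2 : δ ≠ -(α₁ + α₂) := by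
      intro e; rw [e, inner_neg_neg] at hgt; exact lt_irrefl _ hgt
    obtain ⟨c, hcEq⟩ := h'.crystallographic (α₁ + α₂) hsum δ hδ
    obtain ⟨d, hdEq⟩ := h'.crystallographic δ hδ (α₁ + α₂) hsum
    have hbc := cartan_bound h' hsum hδ (ne_of_gt hpos) hneδ1 hneδ2 hcEq hdEq
    have hcmδ : (inner ℝ δ (α₁ + α₂) : ℝ) = inner ℝ (α₁ + α₂) δ := real_inner_comm (α₁ + α₂) δ
    have hdZ : (1:ℤ) ≤ d := by
      have : (0:ℝ) < (d:ℝ) := by nlinarith [hdEq, hpos, hG]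
      have : (0:ℤ) < d := by exact_mod_cast this
      omega
    have hcZ : (1:ℤ) ≤ c := by
      have : (0:ℝ) < (c:ℝ) := by nlinarith [hcEq, hpos, hN, hcmδ]
      have : (0:ℤ) < c := by exact_mod_cast this
      omega
    have hcd : d < c := by
      have hdR : (0:ℝ) < (d:ℝ) := by exact_mod_cast hdZ
      have : (d:ℝ) < (c:ℝ) := by nlinarith [hcEq, hdEq, hcmδ, hgt, hN]
      exact_mod_cast this
    have hd1 : d = 1 := by
      by_contra hdd
      have h2d : 2 ≤ d := by omega
      have h3c : 3 ≤ c := by omega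
      nlinarith [hbc.2]
    have hGN : (inner ℝ δ δ : ℝ) = (c:ℝ) * inner ℝ (α₁ + α₂) (α₁ + α₂) := by
      rw [hd1] at hdEq; push_cast at hdEq
      linarith [hcEq, hcmδ]
    have hc2' : (2:ℤ) ≤ c := by omega
    have horth : ∀ η, η ∈ Φ' → ∀ k : ℤ, 2 ≤ k →
        (inner ℝ (α₁ + α₂) (α₁ + α₂) : ℝ) = (k:ℝ) * inner ℝ η η → (inner ℝ δ η : ℝ) = 0 := by
      intro η hη k hk hNk
      by_contra hneη
      have hEpos : (0:ℝ) < inner ℝ η η := inner_self_pos' (h'.ne_zero η hη)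
      have hkR : (2:ℝ) ≤ (k:ℝ) := by exact_mod_cast hk
      have hEG : (inner ℝ η η : ℝ) < inner ℝ δ δ := by nlinarith [hgt, hN, hEpos]
      have hne1 : η ≠ δ := by intro e; rw [e] at hEG; exact lt_irrefl _ hEG
      have hne2 : η ≠ -δ := by intro e; rw [e, inner_neg_neg] at hEG; exact lt_irrefl _ hEG
      obtain ⟨p, hp⟩ := h'.crystallographic δ hδ η hη
      obtain ⟨q, hq⟩ := h'.crystallographic η hη δ hδ
      have hbb := cartan_bound h' hδ hη hneη hne1 hne2 hp hq
      have hcmη : (inner ℝ η δ : ℝ) = inner ℝ δ η := real_inner_comm δ η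
      have hq1 : (q:ℝ) * inner ℝ η η = (p:ℝ) * inner ℝ δ δ := by linarith [hp, hq, hcmη]
      have hfac : ((q:ℝ) - (p:ℝ) * (c:ℝ) * (k:ℝ)) * inner ℝ η η = 0 := by
        linear_combination hq1 + (p:ℝ) * hGN + ((p:ℝ) * (c:ℝ)) * hNk
      have hq2R : (q:ℝ) = (p:ℝ) * (c:ℝ) * (k:ℝ) := by
        rcases mul_eq_zero.mp hfac with h0 | h0
        · linarith
        · exact absurd h0 (ne_of_gt hEpos)
      have hq2 : q = p * c * k := by exact_mod_cast hq2R
      have hp0 : p ≠ 0 := by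
        intro e; rw [e] at hp; push_cast at hp
        rw [← hcmη] at hneη
        exact hneη (by linarith)
      have hpp : (1:ℤ) ≤ p * p := by
        rcases lt_or_gt_of_ne hp0 with hl | hl
        · nlinarith
        · nlinarith
      have hck : (4:ℤ) ≤ c * k := by nlinarith [hc2', hk]
      have hfin : (4:ℤ) ≤ p * q := by rw [hq2]; nlinarith [hpp, hck]
      linarith [hbb.2, hfin]
    have ho1 : (inner ℝ δ α₁ : ℝ) = 0 := horth α₁ hα₁' n₁ h2n₁ hNA
    have ho2 : (inner ℝ δ α₂ : ℝ) = 0 := horth α₂ hα₂' n₂ h2n₂ hNB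
    have hzero : (inner ℝ (α₁ + α₂) δ : ℝ) = 0 := by
      rw [← hcmδ, inner_add_right, ho1, ho2, add_zero]
    exact absurd hzero (ne_of_gt hpos)
  rcases halt with hne0 | rfl | rfl
  · rcases lt_trichotomy (inner ℝ (α₁ + α₂) γ' : ℝ) 0 with hlt | hz | hgtp
    · have := main (-γ') (h'.neg_mem _ hγ'mem) (by rw [inner_neg_right]; linarith)
      rwa [inner_neg_neg] at this
    · exact absurd hz hne0
    · exact main γ' hγ'mem hgtp
  · exact le_refl _
  · rw [inner_neg_neg]
end

section
/- Let Γ be a finite group acting by isometries on a real inner product space V, let Φ ⊆ V be a finite Γ-stable set of nonzero vectors all of the same length, and suppose every β ∈ Φ is orthogonal to each element of Γ·β other than β itself. If Φ contains a vector α fixed by Γ and a vector β with |Γ·β| > 1, then the projections i*α and i*β onto V^Γ satisfy ⟨i*α, i*α⟩ > ⟨i*β, i*β⟩; in particular the image i*(Φ) contains vectors of at least two distinct lengths. -/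
/-- The averaging map (orthogonal projection onto the fixed subspace) for an orthogonal
action of a finite group on a real inner ℝ product space. -/
noncomputable def avgIso {Γ V : Type*} [Group Γ] [Fintype Γ] [NormedAddCommGroup V]
    [InnerProductSpace ℝ V] (ρ : Γ →* (V ≃ₗᵢ[ℝ] V)) (v : V) : V :=
  (Fintype.card Γ : ℝ)⁻¹ • ∑ γ : Γ, ρ γ v

/-- Let `Γ` act by isometries on a real inner ℝ product space `V`, and let `Φ` be a
finite `Γ`-stable set of nonzero vectors, all of the same length, with every `β ∈ Φ`
orthogonal to each element of its orbit other than itself. If `Φ` contains a `Γ`-fixed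
vector `α` and a vector `β` with nontrivial orbit, then
`⟨i*α, i*α⟩ > ⟨i*β, i*β⟩`; in particular `i*(Φ)` contains vectors of at least two
distinct lengths. -/
theorem stmt_15 {Γ V : Type*} [Group Γ] [Fintype Γ] [NormedAddCommGroup V]
    [InnerProductSpace ℝ V] (ρ : Γ →* (V ≃ₗᵢ[ℝ] V)) (Φ : Finset V)
    (hstable : ∀ (γ : Γ), ∀ v ∈ Φ, ρ γ v ∈ Φ)
    (hne : ∀ v ∈ Φ, v ≠ 0)
    (hlen : ∀ v ∈ Φ, ∀ w ∈ Φ, (inner ℝ v v : ℝ) = (inner ℝ w w : ℝ))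
    (horth : ∀ v ∈ Φ, ∀ γ : Γ, ρ γ v ≠ v → (inner ℝ (ρ γ v) v : ℝ) = 0)
    (α : V) (hα : α ∈ Φ) (hαfix : ∀ γ : Γ, ρ γ α = α)
    (β : V) (hβ : β ∈ Φ) (hβmove : ∃ γ : Γ, ρ γ β ≠ β) :
    (inner ℝ (avgIso ρ β) (avgIso ρ β) : ℝ) < (inner ℝ (avgIso ρ α) (avgIso ρ α) : ℝ) ∧
    (∃ u ∈ (Φ : Set V).image (avgIso ρ), ∃ w ∈ (Φ : Set V).image (avgIso ρ),
      ‖u‖ ≠ ‖w‖) := by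
  classical
  set n : ℝ := (Fintype.card Γ : ℝ) with hn
  have hnpos : (0:ℝ) < n := by
    simp only [hn]
    exact_mod_cast Fintype.card_pos
  have hc : (0:ℝ) < inner ℝ β β := by
    have h0 := hne β hβ
    rw [real_inner_self_eq_norm_sq]
    exact pow_pos (norm_pos_iff.2 h0) 2
  -- avgIso fixes α
  have hαavg : avgIso ρ α = α := by
    simp only [avgIso, hαfix, Finset.sum_const, Finset.card_univ]
    rw [← Nat.cast_smul_eq_nsmul ℝ, smul_smul, inv_mul_cancel₀ hnpos.ne']
    simp
  have key : ∀ γ δ : Γ, (inner ℝ (ρ γ β) (ρ δ β) : ℝ) = inner ℝ (ρ (δ⁻¹ * γ) β) β := by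
    intro γ δ
    have h1 : ρ γ β = ρ δ (ρ (δ⁻¹ * γ) β) := by
      have h2 : (ρ (δ * (δ⁻¹ * γ))) β = (ρ δ) ((ρ (δ⁻¹ * γ)) β) := by
        rw [map_mul ρ δ (δ⁻¹ * γ)]; rfl
      rw [← h2, mul_inv_cancel_left]
    rw [h1, LinearIsometryEquiv.inner_map_map]
  -- the stabilizer set
  set S : Finset Γ := Finset.univ.filter (fun σ => ρ σ β = β) with hS
  have hsum1 : ∑ σ : Γ, (inner ℝ (ρ σ β) β : ℝ) = S.card * inner ℝ β β := by
    have heq : ∀ σ : Γ, (inner ℝ (ρ σ β) β : ℝ) =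
        if ρ σ β = β then (inner ℝ β β : ℝ) else 0 := by
      intro σ
      by_cases h : ρ σ β = β
      · rw [if_pos h, h]
      · rw [if_neg h]; exact horth β hβ σ h
    rw [Finset.sum_congr rfl (fun σ _ => heq σ), ← Finset.sum_filter, ← hS,
      Finset.sum_const, nsmul_eq_mul]
  -- shift sum over γ
  have hshift : ∀ δ : Γ, ∑ γ : Γ, (inner ℝ (ρ γ β) (ρ δ β) : ℝ)
      = ∑ σ : Γ, (inner ℝ (ρ σ β) β : ℝ) := by
    intro δ
    rw [Finset.sum_congr rfl (fun γ _ => key γ δ)]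
    exact Fintype.sum_equiv (Equiv.mulLeft δ⁻¹) _ _ (fun γ => rfl)
  have hdouble : ∑ δ : Γ, ∑ γ : Γ, (inner ℝ (ρ γ β) (ρ δ β) : ℝ)
      = n * (S.card * inner ℝ β β) := by
    rw [Finset.sum_congr rfl (fun δ _ => (hshift δ).trans hsum1),
      Finset.sum_const, Finset.card_univ, nsmul_eq_mul, hn]
  have hβavg : (inner ℝ (avgIso ρ β) (avgIso ρ β) : ℝ)
      = (S.card / n) * inner ℝ β β := by
    have hexp : (inner ℝ (avgIso ρ β) (avgIso ρ β) : ℝ)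
        = n⁻¹ * (n⁻¹ * ∑ δ : Γ, ∑ γ : Γ, (inner ℝ (ρ γ β) (ρ δ β) : ℝ)) := by
      rw [avgIso, real_inner_smul_left, real_inner_smul_right]
      rw [show ((Fintype.card Γ : ℝ)) = n from rfl]
      congr 1
      congr 1
      rw [sum_inner]
      refine Finset.sum_congr rfl fun δ _ => ?_
      rw [inner_sum]
      exact Finset.sum_congr rfl fun γ _ => real_inner_comm _ _
    rw [hexp, hdouble]
    field_simp
  -- strict inequality
  have hScard : (S.card : ℝ) < n := by
    obtain ⟨γ₀, hγ₀⟩ := hβmove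
    have hSsub : S ⊂ Finset.univ := by
      refine Finset.ssubset_univ_iff.2 fun hSu => hγ₀ ?_
      have : γ₀ ∈ S := hSu ▸ Finset.mem_univ γ₀
      exact (Finset.mem_filter.1 this).2
    have := Finset.card_lt_card hSsub
    rw [Finset.card_univ] at this
    rw [hn]
    exact_mod_cast this
  have hlt : (inner ℝ (avgIso ρ β) (avgIso ρ β) : ℝ) < inner ℝ (avgIso ρ α) (avgIso ρ α) := by
    rw [hβavg, hαavg, hlen α hα β hβ]
    have h1 : (S.card : ℝ) / n < 1 := (div_lt_one hnpos).2 hScard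
    calc (S.card : ℝ) / n * inner ℝ β β < 1 * inner ℝ β β := by
          exact mul_lt_mul_of_pos_right h1 hc
      _ = inner ℝ β β := one_mul _
  refine ⟨hlt, ⟨avgIso ρ β, ⟨β, hβ, rfl⟩, avgIso ρ α, ⟨α, hα, rfl⟩, ?_⟩⟩
  intro hnorm
  rw [real_inner_self_eq_norm_sq, real_inner_self_eq_norm_sq, hnorm] at hlt
  exact lt_irrefl _ hlt
end
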